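/- For n ≥ 2k, the partition algebra P_k(n) acts faithfully on (ℂ^n)^{⊗k}, i.e., the representation P_k(n) → End((ℂ^n)^{⊗k}) is injective. -/

import Mathlib

open scoped Classical

/-- The operator on `(ℂ^n)^{⊗k}` (realized as functions on multi-indices
`Fin k → Fin n`) associated to a partition diagram `d` on `2k` vertices: its matrix entry
at a pair of multi-indices is `1` exactly when the combined labelling of the `2k`
vertices is constant on the blocks of `d`, and `0` otherwise. -/
noncomputable def diagramAction (n k : ℕ) (d : Setoid (Fin k ⊕ Fin k)) :
    ((Fin k → Fin n) → ℂ) →ₗ[ℂ] ((Fin k → Fin n) → ℂ) :=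
  Matrix.toLin' (Matrix.of fun f g : Fin k → Fin n =>
    if ∀ x y : Fin k ⊕ Fin k, d.r x y → Sum.elim f g x = Sum.elim f g y then (1 : ℂ) else 0)

/-- The representation of the partition algebra `P_k(n)` (free on diagrams, i.e. set
partitions of the `2k` vertices) on `(ℂ^n)^{⊗k}`, extending `diagramAction` linearly. -/
noncomputable def partitionAlgebraRep (n k : ℕ) :
    (Setoid (Fin k ⊕ Fin k) →₀ ℂ) →ₗ[ℂ] (((Fin k → Fin n) → ℂ) →ₗ[ℂ] ((Fin k → Fin n) → ℂ)) :=
  Finsupp.linearCombination ℂ (diagramAction n k)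

instance setoidFinite (α : Type*) [Finite α] : Finite (Setoid α) :=
  Finite.of_injective (fun s : Setoid α => s.r)
    fun _ _ hab => Setoid.ext fun x y => iff_of_eq (congrFun (congrFun hab x) y)

lemma exists_ker_eq (n k : ℕ) (h : 2 * k ≤ n) (e : Setoid (Fin k ⊕ Fin k)) :
    ∃ f : Fin k ⊕ Fin k → Fin n, Setoid.ker f = e := by
  have hcard : Fintype.card (Quotient e) ≤ Fintype.card (Fin n) := by
    calc Fintype.card (Quotient e) ≤ Fintype.card (Fin k ⊕ Fin k) :=
          Fintype.card_quotient_le e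
      _ ≤ Fintype.card (Fin n) := by
          simp only [Fintype.card_sum, Fintype.card_fin]
          omega
  obtain ⟨emb⟩ := Function.Embedding.nonempty_of_card_le hcard
  refine ⟨fun x => emb (Quotient.mk e x), ?_⟩
  refine Setoid.ext fun x y => ?_
  constructor
  · intro hxy
    have : Quotient.mk e x = Quotient.mk e y := emb.injective hxy
    exact Quotient.eq.mp this
  · intro hxy
    show emb _ = emb _
    exact congrArg emb (Quotient.sound hxy)

/-- For `n ≥ 2k`, the partition algebra `P_k(n)` acts faithfully on `(ℂ^n)^{⊗k}`: the
representation `P_k(n) → End((ℂ^n)^{⊗k})` is injective. -/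
theorem partitionAlgebra_faithful (n k : ℕ) (h : 2 * k ≤ n) :
    Function.Injective (partitionAlgebraRep n k) := by
  rw [injective_iff_map_eq_zero]
  intro c hc
  have key : ∀ e : Setoid (Fin k ⊕ Fin k),
      ∑ d ∈ c.support.filter (· ≤ e), c d = 0 := by
    intro e
    obtain ⟨F, hF⟩ := exists_ker_eq n k h e
    set f : Fin k → Fin n := fun i => F (Sum.inl i)
    set g : Fin k → Fin n := fun i => F (Sum.inr i)
    have hFe : Sum.elim f g = F := by
      funext x; cases x <;> rfl
    have h0 : (partitionAlgebraRep n k c) (Pi.single g 1) f = 0 := by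
      rw [hc]; rfl
    rw [partitionAlgebraRep, Finsupp.linearCombination_apply, Finsupp.sum,
      LinearMap.coe_sum, Finset.sum_apply, Finset.sum_apply] at h0
    have h1 : ∀ d ∈ c.support,
        (c d • diagramAction n k d) (Pi.single g 1) f
          = (if d ≤ e then c d else 0) := by
      intro d _
      rw [LinearMap.smul_apply, diagramAction, Matrix.toLin'_apply,
        Matrix.mulVec_single]
      simp only [Pi.smul_apply, Matrix.col, Matrix.transpose_apply, MulOpposite.op_one, one_smul, Matrix.of_apply, smul_eq_mul, mul_one, hFe]
      have : (∀ x y : Fin k ⊕ Fin k, d.r x y → F x = F y) ↔ d ≤ e := by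
        rw [← hF, Setoid.le_def]
        exact ⟨fun H x y => H x y, fun H x y => H⟩
      split_ifs with h1 h2 h2
      · ring
      · exact absurd (this.mp h1) h2
      · exact absurd (this.mpr h2) h1
      · ring
    rw [Finset.sum_congr rfl h1, ← Finset.sum_filter] at h0
    exact h0
  have main : ∀ e, c e = 0 := by
    intro e
    induction e using WellFoundedLT.induction with
    | _ e IH =>
      by_cases he : c e = 0
      · exact he
      · have hmem : e ∈ c.support.filter (· ≤ e) := by
          simp [Finsupp.mem_support_iff, he]
        have hke := key e
        rw [Finset.sum_eq_single_of_mem e hmem (fun d hd hne => by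
          have hdle : d ≤ e := (Finset.mem_filter.mp hd).2
          exact IH d (lt_of_le_of_ne hdle hne))] at hke
        exact hke
  exact Finsupp.ext main
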